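/- arXiv:2010.08672 — 5 statements merged into one kernel-verified Lean document; each statement's English description precedes it below -/
import Mathlib

section
/- Let n be an abundant number with divisor set D, and let p, m be primes greater than σ(n) + 1 not dividing n. Then the map sending a subset S of the divisors of mn to the subset obtained by replacing each divisor of the form m·d (d | n) with p·d is a bijection between the winning coalitions of the divisor voting system of mn and those of pn. In particular, the divisor voting systems of pn and mn have the same number of winning coalitions. -/
/-- The sum of divisors of `N`. -/
def sigma1 (N : ℕ) : ℕ := ∑ d ∈ N.divisors, d

/-- The quota of the divisor voting system of `N` (when `sigma1 N` is even). -/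
def quota (N : ℕ) : ℕ := sigma1 N / 2 + 1

/-- The winning coalitions of the divisor voting system of `N`. -/
def winning (N : ℕ) : Set (Finset ℕ) :=
  {S | S ⊆ N.divisors ∧ quota N ≤ ∑ x ∈ S, x}

namespace Stmt12Aux

/-- The replacement map on coalitions. -/
def mv (n q r : ℕ) (S : Finset ℕ) : Finset ℕ :=
  S.filter (· ∣ n) ∪ (S.filter (fun x => ¬ x ∣ n)).image (fun x => r * (x / q))

lemma core {σ q a b : ℕ} (hq : σ + 1 < q) (ha : a ≤ σ) (hb : b ≤ σ) :
    ((q + 1) * σ) / 2 + 1 ≤ a + q * b ↔ (σ < 2 * b ∨ (σ = 2 * b ∧ σ < 2 * a)) := by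
  have h2 : (((q + 1) * σ) / 2 + 1 ≤ a + q * b) ↔ (q + 1) * σ < (a + q * b) * 2 := by
    rw [Nat.succ_le_iff, Nat.div_lt_iff_lt_mul (by norm_num)]
  rw [h2]
  rcases lt_trichotomy σ (2 * b) with h | h | h
  · constructor
    · intro _; exact Or.inl h
    · intro _
      have h1 : q * (σ + 1) ≤ q * (2 * b) := Nat.mul_le_mul_left _ h
      nlinarith
  · constructor
    · intro hlt
      refine Or.inr ⟨h, ?_⟩
      nlinarith
    · rintro (h' | ⟨-, h'⟩)
      · omega
      · nlinarith
  · constructor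
    · intro hlt
      exfalso
      have h1 : q * (2 * b + 1) ≤ q * σ := Nat.mul_le_mul_left _ h
      nlinarith
    · rintro (h' | ⟨h', -⟩) <;> omega

lemma mem_div_mul {n q : ℕ} (hq : q.Prime) (hqn : ¬ q ∣ n) (hn : n ≠ 0) {x : ℕ} :
    x ∈ (q * n).divisors ↔ x ∣ n ∨ ∃ d, d ∣ n ∧ x = q * d := by
  rw [Nat.mem_divisors]
  constructor
  · rintro ⟨hx, -⟩
    by_cases hqx : q ∣ x
    · obtain ⟨d, rfl⟩ := hqx
      exact Or.inr ⟨d, (Nat.mul_dvd_mul_iff_left hq.pos).mp hx, rfl⟩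
    · exact Or.inl (Nat.Coprime.dvd_of_dvd_mul_left
        ((hq.coprime_iff_not_dvd.mpr hqx).symm) hx)
  · rintro (hx | ⟨d, hd, rfl⟩)
    · exact ⟨hx.mul_left q, mul_ne_zero hq.pos.ne' hn⟩
    · exact ⟨Nat.mul_dvd_mul_left q hd, mul_ne_zero hq.pos.ne' hn⟩

lemma sigma1_mul {n q : ℕ} (hq : q.Prime) (hqn : ¬ q ∣ n) (hn : n ≠ 0) :
    sigma1 (q * n) = (q + 1) * sigma1 n := by
  have hunion : (q * n).divisors = n.divisors ∪ n.divisors.image (q * ·) := by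
    ext x
    rw [mem_div_mul hq hqn hn, Finset.mem_union, Finset.mem_image]
    simp only [Nat.mem_divisors]
    constructor
    · rintro (hx | ⟨d, hd, rfl⟩)
      · exact Or.inl ⟨hx, hn⟩
      · exact Or.inr ⟨d, ⟨hd, hn⟩, rfl⟩
    · rintro (⟨hx, -⟩ | ⟨d, ⟨hd, -⟩, rfl⟩)
      · exact Or.inl hx
      · exact Or.inr ⟨d, hd, rfl⟩
  have hdisj : Disjoint n.divisors (n.divisors.image (q * ·)) := by
    rw [Finset.disjoint_right]
    rintro x hx hx'
    simp only [Finset.mem_image] at hx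
    obtain ⟨d, -, rfl⟩ := hx
    exact hqn (dvd_trans (dvd_mul_right q d) (Nat.mem_divisors.mp hx').1)
  rw [sigma1, hunion, Finset.sum_union hdisj,
    Finset.sum_image (fun x _ y _ h => Nat.eq_of_mul_eq_mul_left hq.pos h),
    ← Finset.mul_sum]
  simp only [sigma1]
  ring

lemma win_iff {n q : ℕ} (hq : q.Prime) (hqn : ¬ q ∣ n) (hn : n ≠ 0)
    (hbig : sigma1 n + 1 < q) {S : Finset ℕ} (hS : S ⊆ (q * n).divisors) :
    quota (q * n) ≤ ∑ x ∈ S, x ↔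
      (sigma1 n < 2 * ∑ x ∈ S.filter (fun x => ¬ x ∣ n), x / q ∨
       (sigma1 n = 2 * ∑ x ∈ S.filter (fun x => ¬ x ∣ n), x / q ∧
        sigma1 n < 2 * ∑ x ∈ S.filter (· ∣ n), x)) := by
  have key : ∀ x ∈ S.filter (fun x => ¬ x ∣ n), x = q * (x / q) := by
    intro x hx
    simp only [Finset.mem_filter] at hx
    obtain ⟨d, hd, rfl⟩ := ((mem_div_mul hq hqn hn).mp (hS hx.1)).resolve_left hx.2
    rw [Nat.mul_div_cancel_left _ hq.pos]
  have hsum : ∑ x ∈ S, x =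
      (∑ x ∈ S.filter (· ∣ n), x) + q * ∑ x ∈ S.filter (fun x => ¬ x ∣ n), x / q := by
    rw [← Finset.sum_filter_add_sum_filter_not S (· ∣ n), Finset.mul_sum]
    congr 1
    exact Finset.sum_congr rfl key
  have ha : ∑ x ∈ S.filter (· ∣ n), x ≤ sigma1 n := by
    apply Finset.sum_le_sum_of_subset
    intro x hx
    simp only [Finset.mem_filter] at hx
    exact Nat.mem_divisors.mpr ⟨hx.2, hn⟩
  have hb : ∑ x ∈ S.filter (fun x => ¬ x ∣ n), x / q ≤ sigma1 n := by
    have hinj : ∀ x ∈ S.filter (fun x => ¬ x ∣ n), ∀ y ∈ S.filter (fun x => ¬ x ∣ n),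
        x / q = y / q → x = y := by
      intro x hx y hy h
      rw [key x hx, key y hy, h]
    rw [show (∑ x ∈ S.filter (fun x => ¬ x ∣ n), x / q)
        = ∑ y ∈ (S.filter (fun x => ¬ x ∣ n)).image (· / q), y from
      (Finset.sum_image (g := fun x => x / q) (f := fun y => y) hinj).symm]
    apply Finset.sum_le_sum_of_subset
    intro y hy
    simp only [Finset.mem_image] at hy
    obtain ⟨x, hx, rfl⟩ := hy
    simp only [Finset.mem_filter] at hx
    obtain ⟨d, hd, rfl⟩ := ((mem_div_mul hq hqn hn).mp (hS hx.1)).resolve_left hx.2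
    rw [Nat.mul_div_cancel_left _ hq.pos]
    exact Nat.mem_divisors.mpr ⟨hd, hn⟩
  rw [quota, sigma1_mul hq hqn hn, hsum]
  exact core hbig ha hb

lemma mv_spec {n q r : ℕ} (hq : q.Prime) (hqn : ¬ q ∣ n)
    (hr : r.Prime) (hrn : ¬ r ∣ n) (hn : n ≠ 0)
    {S : Finset ℕ} (hS : S ⊆ (q * n).divisors) :
    mv n q r S ⊆ (r * n).divisors ∧
    (mv n q r S).filter (· ∣ n) = S.filter (· ∣ n) ∧
    (∑ x ∈ (mv n q r S).filter (fun x => ¬ x ∣ n), x / r)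
      = ∑ x ∈ S.filter (fun x => ¬ x ∣ n), x / q ∧
    mv n r q (mv n q r S) = S := by
  set F := S.filter (fun x => ¬ x ∣ n) with hF
  have keyF : ∀ x ∈ F, ∃ d, d ∣ n ∧ x = q * d := by
    intro x hx
    simp only [hF, Finset.mem_filter] at hx
    exact ((mem_div_mul hq hqn hn).mp (hS hx.1)).resolve_left hx.2
  -- properties of images
  have himg_not : ∀ y ∈ F.image (fun x => r * (x / q)), ¬ y ∣ n := by
    intro y hy
    simp only [Finset.mem_image] at hy
    obtain ⟨x, hx, rfl⟩ := hy
    intro hdvd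
    exact hrn (dvd_trans (dvd_mul_right r _) hdvd)
  have himg_mem : ∀ y ∈ F.image (fun x => r * (x / q)), y ∈ (r * n).divisors := by
    intro y hy
    simp only [Finset.mem_image] at hy
    obtain ⟨x, hx, rfl⟩ := hy
    obtain ⟨d, hd, rfl⟩ := keyF x hx
    rw [Nat.mul_div_cancel_left _ hq.pos]
    exact (mem_div_mul hr hrn hn).mpr (Or.inr ⟨d, hd, rfl⟩)
  have hA_filter : (S.filter (· ∣ n)).filter (· ∣ n) = S.filter (· ∣ n) :=
    Finset.filter_true_of_mem (fun x hx => (Finset.mem_filter.mp hx).2)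
  have hA_filter' : (S.filter (· ∣ n)).filter (fun x => ¬ x ∣ n) = ∅ :=
    Finset.filter_false_of_mem
      (fun x hx h => h (Finset.mem_filter.mp hx).2)
  have himg_filter : (F.image (fun x => r * (x / q))).filter (· ∣ n) = ∅ :=
    Finset.filter_false_of_mem (fun y hy h => himg_not y hy h)
  have himg_filter' : (F.image (fun x => r * (x / q))).filter (fun x => ¬ x ∣ n)
      = F.image (fun x => r * (x / q)) :=
    Finset.filter_true_of_mem (fun y hy => himg_not y hy)
  have hfilt1 : (mv n q r S).filter (· ∣ n) = S.filter (· ∣ n) := by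
    rw [mv, Finset.filter_union, hA_filter, himg_filter, Finset.union_empty]
  have hfilt2 : (mv n q r S).filter (fun x => ¬ x ∣ n) = F.image (fun x => r * (x / q)) := by
    rw [mv, Finset.filter_union, hA_filter', himg_filter', Finset.empty_union]
  refine ⟨?_, hfilt1, ?_, ?_⟩
  · intro y hy
    rw [mv, Finset.mem_union] at hy
    rcases hy with hy | hy
    · simp only [Finset.mem_filter] at hy
      exact (mem_div_mul hr hrn hn).mpr (Or.inl hy.2)
    · exact himg_mem y hy
  · rw [hfilt2]
    have hinj : ∀ x ∈ F, ∀ y ∈ F, r * (x / q) = r * (y / q) → x = y := by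
      intro x hx y hy h
      obtain ⟨d, hd, rfl⟩ := keyF x hx
      obtain ⟨e, he, rfl⟩ := keyF y hy
      rw [Nat.mul_div_cancel_left _ hq.pos, Nat.mul_div_cancel_left _ hq.pos] at h
      rw [Nat.eq_of_mul_eq_mul_left hr.pos h]
    rw [Finset.sum_image hinj]
    apply Finset.sum_congr rfl
    intro x hx
    rw [Nat.mul_div_cancel_left _ hr.pos]
  · rw [mv, hfilt1, hfilt2, Finset.image_image]
    have : F.image ((fun x => q * (x / r)) ∘ (fun x => r * (x / q))) = F := by
      rw [show F.image ((fun x => q * (x / r)) ∘ (fun x => r * (x / q))) = F.image id from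
        Finset.image_congr ?_, Finset.image_id]
      intro x hx
      simp only [Function.comp_apply, id_eq]
      obtain ⟨d, hd, rfl⟩ := keyF x hx
      rw [Nat.mul_div_cancel_left _ hq.pos, Nat.mul_div_cancel_left _ hr.pos]
    rw [this, hF, Finset.filter_union_filter_not_eq]

lemma mv_winning {n q r : ℕ} (hq : q.Prime) (hqn : ¬ q ∣ n)
    (hr : r.Prime) (hrn : ¬ r ∣ n) (hn : n ≠ 0)
    (hbigq : sigma1 n + 1 < q) (hbigr : sigma1 n + 1 < r)
    {S : Finset ℕ} (hS : S ∈ winning (q * n)) : mv n q r S ∈ winning (r * n) := by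
  obtain ⟨hsub, hwin⟩ := hS
  obtain ⟨hsub', hf1, hf2, -⟩ := mv_spec hq hqn hr hrn hn hsub
  refine ⟨hsub', ?_⟩
  rw [win_iff hr hrn hn hbigr hsub', hf1, hf2]
  rw [win_iff hq hqn hn hbigq hsub] at hwin
  exact hwin

end Stmt12Aux

open Stmt12Aux in
theorem stmt_12 (n p m : ℕ) (habund : 2 * n < sigma1 n)
    (hp : p.Prime) (hm : m.Prime)
    (hpσ : sigma1 n + 1 < p) (hmσ : sigma1 n + 1 < m)
    (hpn : ¬ p ∣ n) (hmn : ¬ m ∣ n) :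
    Set.BijOn
      (fun S : Finset ℕ =>
        S.filter (· ∣ n) ∪ (S.filter (fun x => ¬ x ∣ n)).image (fun x => p * (x / m)))
      (winning (m * n)) (winning (p * n)) ∧
    ((m * n).divisors.powerset.filter (fun S => quota (m * n) ≤ ∑ x ∈ S, x)).card =
      ((p * n).divisors.powerset.filter (fun S => quota (p * n) ≤ ∑ x ∈ S, x)).card := by
  have hn : n ≠ 0 := by
    rintro rfl
    simp [sigma1] at habund
  have hbij : Set.BijOn (mv n m p) (winning (m * n)) (winning (p * n)) := by
    apply Set.InvOn.bijOn (f' := mv n p m)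
    · constructor
      · intro S hS
        exact (mv_spec hm hmn hp hpn hn hS.1).2.2.2
      · intro S hS
        exact (mv_spec hp hpn hm hmn hn hS.1).2.2.2
    · intro S hS
      exact mv_winning hm hmn hp hpn hn hmσ hpσ hS
    · intro S hS
      exact mv_winning hp hpn hm hmn hn hpσ hmσ hS
  refine ⟨hbij, ?_⟩
  have hset : ∀ N : ℕ, winning N =
      ↑(N.divisors.powerset.filter (fun S => quota N ≤ ∑ x ∈ S, x)) := by
    intro N
    ext S
    simp [winning, Finset.mem_filter, Finset.mem_powerset]
  have hcard : (winning (m * n)).ncard = (winning (p * n)).ncard := by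
    rw [← hbij.image_eq]
    exact (Set.ncard_image_of_injOn hbij.injOn).symm
  rw [hset (m * n), hset (p * n), Set.ncard_coe_finset, Set.ncard_coe_finset] at hcard
  exact hcard
end

section
/- For any positive integer C there exists K such that for all integers k ≥ K, with m = 2k - 1 and b = (k - C)/(2k² - k), one has ⌊1/(2b)⌋ = k + C - 1 and the identity (2⌊1/(2b)⌋ - m + 1)/(m + 1) = 1 - m·b holds. -/
theorem stmt_14 (C : ℕ) (hC : 0 < C) :
    ∃ K : ℕ, ∀ k : ℕ, K ≤ k → ∀ m : ℕ, m = 2 * k - 1 →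
      ∀ b : ℝ, b = ((k : ℝ) - C) / (2 * (k : ℝ) ^ 2 - k) →
        ⌊1 / (2 * b)⌋ = (k : ℤ) + C - 1 ∧
        (2 * (⌊1 / (2 * b)⌋ : ℝ) - m + 1) / ((m : ℝ) + 1) = 1 - m * b := by
  refine ⟨2 * C ^ 2 + 2 * C + 2, ?_⟩
  intro k hk m hm b hb
  have hCR : (1 : ℝ) ≤ C := by exact_mod_cast hC
  have hkR : (2 : ℝ) * C ^ 2 + 2 * C + 2 ≤ k := by exact_mod_cast hk
  have hkC : (C : ℝ) + 1 ≤ k := by nlinarith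
  have hkpos : (0 : ℝ) < k := by linarith
  have hden : (0 : ℝ) < 2 * (k : ℝ) ^ 2 - k := by nlinarith
  have hnum : (0 : ℝ) < (k : ℝ) - C := by linarith
  have hbval : 1 / (2 * b) = (2 * (k : ℝ) ^ 2 - k) / (2 * ((k : ℝ) - C)) := by
    rw [hb]; field_simp
  have hfloor : ⌊1 / (2 * b)⌋ = (k : ℤ) + C - 1 := by
    rw [Int.floor_eq_iff, hbval]
    constructor
    · rw [le_div_iff₀ (by linarith)]
      push_cast
      nlinarith
    · rw [div_lt_iff₀ (by linarith)]
      push_cast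
      nlinarith
  refine ⟨hfloor, ?_⟩
  have hk1 : 1 ≤ k := by omega
  have hmR : (m : ℝ) = 2 * k - 1 := by
    rw [hm]; push_cast [Nat.cast_sub (by omega : 1 ≤ 2 * k)]; ring
  rw [hfloor, hmR, hb]
  push_cast
  have h2k : (2 : ℝ) * k - 1 > 0 := by linarith
  field_simp
  ring
end

section
/- For any positive integer C there exists K such that for all integers k ≥ K, with m = 2k and b = (k - C)/(2k² + k), one has ⌊1/(2b)⌋ = k + C and the identity (2⌊1/(2b)⌋ - m + 1)/(m + 1) = 1 - m·b holds. -/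
theorem stmt_15 (C : ℕ) (hC : 0 < C) :
    ∃ K : ℕ, ∀ k : ℕ, K ≤ k → ∀ m : ℕ, m = 2 * k →
      ∀ b : ℝ, b = ((k : ℝ) - C) / (2 * (k : ℝ) ^ 2 + k) →
        ⌊1 / (2 * b)⌋ = (k : ℤ) + C ∧
        (2 * (⌊1 / (2 * b)⌋ : ℝ) - m + 1) / ((m : ℝ) + 1) = 1 - m * b := by
  refine ⟨2 * C ^ 2 + 2 * C + 1, fun k hk m hm b hb => ?_⟩
  have hkC : (2 * C ^ 2 + 2 * C + 1 : ℝ) ≤ k := by exact_mod_cast hk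
  have hCpos : (0 : ℝ) < C := by exact_mod_cast hC
  have hkpos : (0 : ℝ) < k := by nlinarith
  have hnum : (0 : ℝ) < (k : ℝ) - C := by nlinarith
  have hden : (0 : ℝ) < 2 * (k : ℝ) ^ 2 + k := by nlinarith
  have hbpos : 0 < b := by rw [hb]; positivity
  have hinv : 1 / (2 * b) = (2 * (k : ℝ) ^ 2 + k) / (2 * ((k : ℝ) - C)) := by
    rw [hb]; field_simp
  have hfloor : ⌊1 / (2 * b)⌋ = (k : ℤ) + C := by
    rw [hinv, Int.floor_eq_iff]
    constructor
    · rw [le_div_iff₀ (by linarith)]; push_cast; nlinarith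
    · rw [div_lt_iff₀ (by linarith)]; push_cast; nlinarith
  refine ⟨hfloor, ?_⟩
  rw [hfloor, hb, hm]
  push_cast
  have h1 : (2 : ℝ) * k + 1 ≠ 0 := by positivity
  field_simp
  ring
end

section
/- Suppose m = 2k - 1 and b ∈ (0, 1/m) with 1/(2b) ∉ ℤ satisfies (2⌊1/(2b)⌋ - m + 1)/(m + 1) = 1 - mb with 1 - mb ≠ b. Then there exists a positive integer C with b = (k - C)/(2k² - k). -/
theorem stmt_16 (k : ℕ) (hk : 0 < k) (m : ℕ) (hm : m = 2 * k - 1)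
    (b : ℝ) (hb0 : 0 < b) (hb1 : b < 1 / m)
    (hirr : ¬ ∃ z : ℤ, 1 / (2 * b) = (z : ℝ))
    (hfix : (2 * (⌊1 / (2 * b)⌋ : ℝ) - m + 1) / ((m : ℝ) + 1) = 1 - m * b)
    (hnontriv : 1 - (m : ℝ) * b ≠ b) :
    ∃ C : ℕ, 0 < C ∧ b = ((k : ℝ) - C) / (2 * (k : ℝ) ^ 2 - k) := by
  set F : ℤ := ⌊1 / (2 * b)⌋ with hF
  have hkR : (1 : ℝ) ≤ (k : ℝ) := by exact_mod_cast hk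
  have hmR : (m : ℝ) = 2 * (k : ℝ) - 1 := by
    rw [hm]
    push_cast [Nat.cast_sub (by omega : 1 ≤ 2 * k)]
    ring
  have hmpos : (0 : ℝ) < (m : ℝ) := by rw [hmR]; linarith
  -- from hfix: b = (2k - 1 - F)/(k*(2k-1))
  have hfix' : (2 : ℝ) * F - m + 1 = (1 - m * b) * ((m : ℝ) + 1) := by
    field_simp at hfix
    linarith [hfix]
  have hb : b = ((2 * (k : ℝ) - 1) - F) / ((k : ℝ) * (2 * (k : ℝ) - 1)) := by
    rw [hmR] at hfix'
    have hden : (k : ℝ) * (2 * (k : ℝ) - 1) ≠ 0 := by nlinarith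
    have h2k : (2 * (k : ℝ) - 1) ≠ 0 := by linarith
    field_simp
    nlinarith [hfix']
  -- F ≥ k
  have hFk : (k : ℤ) ≤ F := by
    by_contra h
    push_neg at h
    have hFle : (F : ℝ) ≤ (k : ℝ) - 1 := by
      have : F ≤ (k : ℤ) - 1 := by omega
      exact_mod_cast this
    have hb1' : b < 1 / (2 * (k : ℝ) - 1) := by rwa [hmR] at hb1
    have hkm : (0 : ℝ) < (k : ℝ) * (2 * (k : ℝ) - 1) := by nlinarith
    have hge : 1 / (2 * (k : ℝ) - 1) ≤ b := by
      rw [hb]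
      rw [div_le_div_iff₀ (by linarith) hkm]
      nlinarith
    linarith
  refine ⟨(F - k + 1).toNat, by omega, ?_⟩
  have hC : ((F - (k : ℤ) + 1).toNat : ℝ) = (F : ℝ) - (k : ℝ) + 1 := by
    have : ((F - (k : ℤ) + 1).toNat : ℤ) = F - k + 1 := Int.toNat_of_nonneg (by omega)
    exact_mod_cast this
  rw [hb, hC]
  ring_nf
end

section
/- For all sufficiently large integers k, b = k/((k+1)(2k+1)) satisfies the fixed-point equation ( (⌊1/(2b)⌋ - k)(3k - ⌊1/(2b)⌋ + 1) + (⌊1/(2b)⌋ - k + 1)(3k - ⌊1/(2b)⌋ + 2) ) / (2(2k+1)(2k+2)) = (1 - 2kb)/2. -/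
theorem stmt_18 :
    ∃ K : ℕ, ∀ k : ℕ, K ≤ k → ∀ b : ℝ, b = (k : ℝ) / (((k : ℝ) + 1) * (2 * k + 1)) →
      (((⌊1 / (2 * b)⌋ : ℝ) - k) * (3 * k - (⌊1 / (2 * b)⌋ : ℝ) + 1) +
        ((⌊1 / (2 * b)⌋ : ℝ) - k + 1) * (3 * k - (⌊1 / (2 * b)⌋ : ℝ) + 2)) /
          (2 * (2 * (k : ℝ) + 1) * (2 * k + 2)) = (1 - 2 * k * b) / 2 := by
  use 2
  intro k hk b hb
  have hk' : (2:ℝ) ≤ (k:ℝ) := by exact_mod_cast hk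
  have hkpos : (0:ℝ) < (k:ℝ) := by linarith
  have h1 : ((k:ℝ)+1) ≠ 0 := by positivity
  have h2 : (2*(k:ℝ)+1) ≠ 0 := by positivity
  have hb' : 1/(2*b) = ((k:ℝ)+1)*(2*(k:ℝ)+1)/(2*(k:ℝ)) := by
    rw [hb]; field_simp
  have hfloor : ⌊1/(2*b)⌋ = (k:ℤ)+1 := by
    rw [hb', Int.floor_eq_iff]
    constructor
    · push_cast
      rw [le_div_iff₀ (by linarith)]
      nlinarith
    · push_cast
      rw [div_lt_iff₀ (by linarith)]
      nlinarith
  rw [hfloor, hb]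
  push_cast
  field_simp
  ring
end
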